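/- Let Z(f) = A₁ + A₂*f + f*A₂ + f*A₃f where A₁ is d×d Hermitian, A₂ is q×d complex, A₃ is q×q Hermitian positive definite, and f ranges over q×d complex matrices. Then Z(f) ≥ A₁ - A₂*A₃⁻¹A₂ for all f (Loewner order), with equality when f = -A₃⁻¹A₂; consequently min_f [Tr(G·Z(f)) + Tr|√G Im Z(f) √G|] over complex f equals Tr(G·J) + Tr|√G Im J √G| where J = A₁ - A₂*A₃⁻¹A₂, for any real positive definite G. -/

import Mathlib

open Matrix
open scoped ComplexOrder
noncomputable section

/-- Entrywise real part, as a complex matrix. -/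
def reM {m n : Type*} (J : Matrix m n ℂ) : Matrix m n ℂ := fun i j => ((J i j).re : ℂ)

/-- Entrywise imaginary part, as a complex matrix. -/
def imM {m n : Type*} (J : Matrix m n ℂ) : Matrix m n ℂ := fun i j => ((J i j).im : ℂ)

/-- A complex matrix has all real entries. -/
def IsRealMat {m n : Type*} (A : Matrix m n ℂ) : Prop := ∀ i j, (A i j).im = 0

/-- The square root of a positive semidefinite matrix, as `Matrix.PosSemidef.sqrt` was defined
in older Mathlib (since removed). -/
def Matrix.PosSemidef.sqrtOld {n : Type*} [Fintype n] [DecidableEq n] {A : Matrix n n ℂ}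
    (hA : A.PosSemidef) : Matrix n n ℂ :=
  (hA.1.eigenvectorUnitary : Matrix n n ℂ) * diagonal ((↑) ∘ (√·) ∘ hA.1.eigenvalues) *
    (star hA.1.eigenvectorUnitary : Matrix n n ℂ)

/-- Matrix absolute value `|A| = √(Aᴴ A)`. -/
def matAbs {n : Type*} [Fintype n] [DecidableEq n] (A : Matrix n n ℂ) : Matrix n n ℂ :=
  (Matrix.posSemidef_conjTranspose_mul_self A).sqrtOld

open scoped MatrixOrder in
lemma Matrix.PosSemidef.sqrtOld_eq_cfc {n : Type*} [Fintype n] [DecidableEq n] {A : Matrix n n ℂ}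
    (hA : A.PosSemidef) : hA.sqrtOld = CFC.sqrt A := by
  rw [CFC.sqrt_eq_cfc, cfc_nnreal_eq_real _ A hA.nonneg, hA.1.cfc_eq]
  simp only [IsHermitian.cfc, sqrtOld, Unitary.conjStarAlgAut_apply]
  congr 3
  ext i
  simp [Real.coe_sqrt, Real.coe_toNNReal', hA.eigenvalues_nonneg]

open scoped MatrixOrder in
lemma Matrix.PosSemidef.posSemidef_sqrtOld {n : Type*} [Fintype n] [DecidableEq n]
    {A : Matrix n n ℂ} (hA : A.PosSemidef) : hA.sqrtOld.PosSemidef := by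
  rw [hA.sqrtOld_eq_cfc]; exact (CFC.sqrt_nonneg A).posSemidef

open scoped MatrixOrder in
lemma Matrix.PosSemidef.sqrtOld_mul_self {n : Type*} [Fintype n] [DecidableEq n]
    {A : Matrix n n ℂ} (hA : A.PosSemidef) : hA.sqrtOld * hA.sqrtOld = A := by
  rw [hA.sqrtOld_eq_cfc]; exact CFC.sqrt_mul_sqrt_self A hA.nonneg

lemma Matrix.PosSemidef.sq_sqrtOld {n : Type*} [Fintype n] [DecidableEq n]
    {A : Matrix n n ℂ} (hA : A.PosSemidef) : hA.sqrtOld ^ 2 = A := by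
  rw [pow_two, hA.sqrtOld_mul_self]

open scoped MatrixOrder in
lemma Matrix.PosSemidef.eq_sqrtOld_of_sq_eq {n : Type*} [Fintype n] [DecidableEq n]
    {A B : Matrix n n ℂ} (hB : B.PosSemidef) (hA : A.PosSemidef) (h : B ^ 2 = A) :
    B = hA.sqrtOld := by
  rw [hA.sqrtOld_eq_cfc, eq_comm, CFC.sqrt_eq_iff A B hA.nonneg hB.nonneg, ← pow_two, h]

variable {n : Type*} [Fintype n] [DecidableEq n]

lemma psd_diag_nonneg {A : Matrix n n ℂ} (hA : A.PosSemidef) (i : n) : 0 ≤ A i i := by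
  exact hA.diag_nonneg

/-- absolute value of a Hermitian matrix via spectral theorem -/
def absH {M : Matrix n n ℂ} (hM : M.IsHermitian) : Matrix n n ℂ :=
  (hM.eigenvectorUnitary : Matrix n n ℂ) *
    diagonal (fun i => ((|hM.eigenvalues i| : ℝ) : ℂ)) *
    (star (hM.eigenvectorUnitary : Matrix n n ℂ))

lemma absH_posSemidef {M : Matrix n n ℂ} (hM : M.IsHermitian) : (absH hM).PosSemidef := by
  have hd : (diagonal (fun i => ((|hM.eigenvalues i| : ℝ) : ℂ))).PosSemidef :=
    Matrix.posSemidef_diagonal_iff.mpr fun i => Complex.zero_le_real.mpr (abs_nonneg _)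
  exact hd.mul_mul_conjTranspose_same (hM.eigenvectorUnitary : Matrix n n ℂ)

lemma absH_spec {M : Matrix n n ℂ} (hM : M.IsHermitian) :
    ∃ (U : Matrix n n ℂ) (lam : n → ℝ),
      star U * U = 1 ∧ U * star U = 1 ∧
      M = U * diagonal (fun i => ((lam i : ℝ) : ℂ)) * star U ∧
      absH hM = U * diagonal (fun i => ((|lam i| : ℝ) : ℂ)) * star U :=
  ⟨hM.eigenvectorUnitary, hM.eigenvalues,
    (Matrix.mem_unitaryGroup_iff').mp hM.eigenvectorUnitary.2,
    (Matrix.mem_unitaryGroup_iff).mp hM.eigenvectorUnitary.2,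
    hM.spectral_theorem, rfl⟩

lemma conj_diag_key {U : Matrix n n ℂ} (h1 : star U * U = 1) (d e : n → ℂ) :
    (U * diagonal d * star U) * (U * diagonal e * star U)
      = U * diagonal (fun i => d i * e i) * star U := by
  calc (U * diagonal d * star U) * (U * diagonal e * star U)
      = U * diagonal d * (star U * U) * (diagonal e * star U) := by noncomm_ring
    _ = U * (diagonal d * diagonal e) * star U := by rw [h1]; noncomm_ring
    _ = U * diagonal (fun i => d i * e i) * star U := by rw [diagonal_mul_diagonal]

lemma absH_sq {M : Matrix n n ℂ} (hM : M.IsHermitian) :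
    absH hM * absH hM = M * M := by
  obtain ⟨U, lam, hsU, hUs, hMeq, hAeq⟩ := absH_spec hM
  rw [hAeq, conj_diag_key hsU]
  conv_rhs => rw [hMeq]
  rw [conj_diag_key hsU]
  congr 2
  ext i j
  rcases eq_or_ne i j with h | h <;>
    simp [Matrix.diagonal_apply, h, ← Complex.ofReal_mul, abs_mul_abs_self]

lemma absH_sub_posSemidef {M : Matrix n n ℂ} (hM : M.IsHermitian) :
    (absH hM - M).PosSemidef := by
  obtain ⟨U, lam, hsU, hUs, hMeq, hAeq⟩ := absH_spec hM
  rw [hAeq, hMeq]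
  have : U * diagonal (fun i => ((|lam i| : ℝ) : ℂ)) * star U
      - U * diagonal (fun i => ((lam i : ℝ) : ℂ)) * star U
      = U * diagonal (fun i => ((|lam i| - lam i : ℝ) : ℂ)) * star U := by
    rw [← sub_mul, ← mul_sub]
    congr 2
    ext i j
    rcases eq_or_ne i j with h | h <;>
      simp [Matrix.diagonal_apply, h, Complex.ofReal_sub]
  rw [this]
  exact (Matrix.posSemidef_diagonal_iff.mpr fun i =>
    Complex.zero_le_real.mpr (by simp [le_abs_self])).mul_mul_conjTranspose_same U

lemma absH_add_posSemidef {M : Matrix n n ℂ} (hM : M.IsHermitian) :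
    (absH hM + M).PosSemidef := by
  obtain ⟨U, lam, hsU, hUs, hMeq, hAeq⟩ := absH_spec hM
  rw [hAeq, hMeq]
  have : U * diagonal (fun i => ((|lam i| : ℝ) : ℂ)) * star U
      + U * diagonal (fun i => ((lam i : ℝ) : ℂ)) * star U
      = U * diagonal (fun i => ((|lam i| + lam i : ℝ) : ℂ)) * star U := by
    rw [← add_mul, ← mul_add]
    congr 2
    ext i j
    rcases eq_or_ne i j with h | h <;>
      simp [Matrix.diagonal_apply, h, Complex.ofReal_add]
  rw [this]
  refine (Matrix.posSemidef_diagonal_iff.mpr fun i =>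
    Complex.zero_le_real.mpr ?_).mul_mul_conjTranspose_same U
  linarith [neg_abs_le (lam i)]

lemma trace_absH_le {M V : Matrix n n ℂ} (hM : M.IsHermitian)
    (h1 : (V - M).PosSemidef) (h2 : (V + M).PosSemidef) :
    (Matrix.trace (absH hM)).re ≤ (Matrix.trace V).re := by
  obtain ⟨U, lam, hsU, hUs, hMeq, hAeq⟩ := absH_spec hM
  set W : Matrix n n ℂ := star U * V * U with hW
  have hconjM : star U * M * U = diagonal (fun i => ((lam i : ℝ) : ℂ)) := by
    rw [hMeq]
    calc star U * (U * diagonal (fun i => ((lam i : ℝ) : ℂ)) * star U) * U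
        = (star U * U) * diagonal (fun i => ((lam i : ℝ) : ℂ)) * (star U * U) := by noncomm_ring
      _ = diagonal (fun i => ((lam i : ℝ) : ℂ)) := by rw [hsU]; noncomm_ring
  have htrW : Matrix.trace W = Matrix.trace V := by
    rw [hW, Matrix.trace_mul_cycle, hUs, one_mul]
  have htrA : (Matrix.trace (absH hM)).re = ∑ i, |lam i| := by
    rw [hAeq, Matrix.trace_mul_cycle, hsU, one_mul, Matrix.trace_diagonal, Complex.re_sum]
    simp
  have hdiag : ∀ i, |lam i| ≤ (W i i).re := by
    intro i
    have e1 : (star U * (V - M) * U) = W - diagonal (fun i => ((lam i : ℝ) : ℂ)) := by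
      rw [hW, ← hconjM]; noncomm_ring
    have e2 : (star U * (V + M) * U) = W + diagonal (fun i => ((lam i : ℝ) : ℂ)) := by
      rw [hW, ← hconjM]; noncomm_ring
    have p1 := psd_diag_nonneg (e1 ▸ h1.conjTranspose_mul_mul_same U) i
    have p2 := psd_diag_nonneg (e2 ▸ h2.conjTranspose_mul_mul_same U) i
    rw [Complex.le_def] at p1 p2
    simp only [Matrix.sub_apply, Matrix.add_apply, Matrix.diagonal_apply_eq,
      Complex.sub_re, Complex.add_re, Complex.zero_re, Complex.ofReal_re] at p1 p2
    rw [abs_le]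
    exact ⟨by linarith [p2.1], by linarith [p1.1]⟩
  calc (Matrix.trace (absH hM)).re = ∑ i, |lam i| := htrA
    _ ≤ ∑ i, (W i i).re := Finset.sum_le_sum fun i _ => hdiag i
    _ = (Matrix.trace W).re := by rw [Matrix.trace, Complex.re_sum]; rfl
    _ = (Matrix.trace V).re := by rw [htrW]

lemma I_smul_isHermitian {B : Matrix n n ℂ} (hB : Bᴴ = -B) :
    (Complex.I • B).IsHermitian := by
  unfold Matrix.IsHermitian
  rw [conjTranspose_smul, hB]
  simp [Complex.conj_I]

lemma matAbs_eq {B : Matrix n n ℂ} (hB : Bᴴ = -B) :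
    matAbs B = absH (I_smul_isHermitian hB) := by
  refine ((absH_posSemidef _).eq_sqrtOld_of_sq_eq (posSemidef_conjTranspose_mul_self B) ?_).symm
  rw [pow_two, absH_sq, hB, smul_mul_smul_comm, Complex.I_mul_I, neg_smul, one_smul, neg_mul]

lemma trace_matAbs_le {B V : Matrix n n ℂ} (hB : Bᴴ = -B)
    (h1 : (V - Complex.I • B).PosSemidef) (h2 : (V + Complex.I • B).PosSemidef) :
    (Matrix.trace (matAbs B)).re ≤ (Matrix.trace V).re := by
  rw [matAbs_eq hB]; exact trace_absH_le _ h1 h2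

lemma matAbs_sub_psd {B : Matrix n n ℂ} (hB : Bᴴ = -B) :
    (matAbs B - Complex.I • B).PosSemidef := by
  rw [matAbs_eq hB]; exact absH_sub_posSemidef _

lemma matAbs_add_psd {B : Matrix n n ℂ} (hB : Bᴴ = -B) :
    (matAbs B + Complex.I • B).PosSemidef := by
  rw [matAbs_eq hB]; exact absH_add_posSemidef _

lemma reM_add_I_imM {m : Type*} (X : Matrix m m ℂ) : reM X + Complex.I • imM X = X := by
  ext i j
  simp [reM, imM, Matrix.add_apply, Complex.ext_iff]

lemma reM_sub_I_imM_of_herm {X : Matrix n n ℂ} (hX : X.IsHermitian) :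
    reM X - Complex.I • imM X = Xᵀ := by
  ext i j
  have := congrFun (congrFun hX j) i
  rw [conjTranspose_apply] at this
  simp only [Matrix.sub_apply, Matrix.smul_apply, reM, imM, transpose_apply, smul_eq_mul]
  rw [← this]
  simp [Complex.ext_iff]

lemma imM_isReal {m k : Type*} (X : Matrix m k ℂ) : IsRealMat (imM X) := fun i j => by
  simp [imM]

lemma reM_isReal {m k : Type*} (X : Matrix m k ℂ) : IsRealMat (reM X) := fun i j => by
  simp [reM]

lemma conj_eq_of_real {m k : Type*} {A : Matrix m k ℂ} (hA : IsRealMat A) (i : m) (j : k) :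
    (starRingEnd ℂ) (A i j) = A i j :=
  Complex.conj_eq_iff_im.mpr (hA i j)

lemma imM_conjTranspose_of_herm {X : Matrix n n ℂ} (hX : X.IsHermitian) :
    (imM X)ᴴ = -(imM X) := by
  ext i j
  have := congrFun (congrFun hX i) j
  rw [conjTranspose_apply] at this
  simp only [conjTranspose_apply, imM, Matrix.neg_apply]
  rw [← this]
  simp [Complex.ext_iff]

lemma trace_real_im {A B : Matrix n n ℂ} (hA : IsRealMat A) (hB : IsRealMat B) :
    (Matrix.trace (A * B)).im = 0 := by
  rw [Matrix.trace, Complex.im_sum]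
  refine Finset.sum_eq_zero fun i _ => ?_
  rw [Matrix.diag_apply, Matrix.mul_apply, Complex.im_sum]
  exact Finset.sum_eq_zero fun j _ => by simp [Complex.mul_im, hA i j, hB j i]

section sqrtReal

variable {G : Matrix n n ℂ} (hG : G.PosDef) (hGreal : IsRealMat G)

include hGreal in
lemma sqrt_transpose_eq : (hG.posSemidef.sqrtOld)ᵀ = hG.posSemidef.sqrtOld := by
  have hGt : Gᵀ = G := by
    ext i j
    have h1 := congrFun (congrFun hG.isHermitian j) i
    rw [conjTranspose_apply] at h1
    have h2 : star (G i j) = G i j := by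
      have := hGreal i j
      simp [Complex.star_def, Complex.conj_eq_iff_im, this]
    rw [transpose_apply, ← h1, h2]
  exact ((hG.posSemidef.posSemidef_sqrtOld.transpose).eq_sqrtOld_of_sq_eq hG.posSemidef (by
    rw [pow_two, ← transpose_mul, ← pow_two, hG.posSemidef.sq_sqrtOld, hGt]))

include hGreal in
lemma sqrt_isReal : IsRealMat hG.posSemidef.sqrtOld := by
  intro i j
  have hherm : (hG.posSemidef.sqrtOld).IsHermitian := hG.posSemidef.posSemidef_sqrtOld.1
  have h1 := congrFun (congrFun hherm i) j
  rw [conjTranspose_apply] at h1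
  have h2 := congrFun (congrFun (sqrt_transpose_eq hG hGreal) i) j
  rw [transpose_apply] at h2
  have h3 : star (hG.posSemidef.sqrtOld i j) = hG.posSemidef.sqrtOld i j := by rw [← h2] at h1 ⊢; exact h1
  simpa [Complex.star_def, Complex.conj_eq_iff_im] using h3

end sqrtReal

lemma isRealMat_mul {A B : Matrix n n ℂ} (hA : IsRealMat A) (hB : IsRealMat B) :
    IsRealMat (A * B) := by
  intro i j
  rw [Matrix.mul_apply, Complex.im_sum]
  exact Finset.sum_eq_zero fun k _ => by simp [Complex.mul_im, hA i k, hB k j]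

lemma F_mono {G : Matrix n n ℂ} (hG : G.PosDef) (hGreal : IsRealMat G)
    {X Y : Matrix n n ℂ} (hX : X.IsHermitian) (hY : Y.IsHermitian)
    (hXY : (X - Y).PosSemidef) :
    (Matrix.trace (G * Y)).re
        + (Matrix.trace (matAbs (hG.posSemidef.sqrtOld * imM Y * hG.posSemidef.sqrtOld))).re
      ≤ (Matrix.trace (G * X)).re
        + (Matrix.trace (matAbs (hG.posSemidef.sqrtOld * imM X * hG.posSemidef.sqrtOld))).re := by
  set s : Matrix n n ℂ := hG.posSemidef.sqrtOld with hs
  have hsherm : s.IsHermitian := hG.posSemidef.posSemidef_sqrtOld.1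
  have hsreal : IsRealMat s := sqrt_isReal hG hGreal
  have hst : sᵀ = s := sqrt_transpose_eq hG hGreal
  have hss : s * s = G := hG.posSemidef.sqrtOld_mul_self
  set P : Matrix n n ℂ := X - Y with hP
  have hPH : P.IsHermitian := hX.sub hY
  -- skew-ness of the B matrices
  have skew : ∀ {W : Matrix n n ℂ}, W.IsHermitian → (s * imM W * s)ᴴ = -(s * imM W * s) := by
    intro W hW
    rw [conjTranspose_mul, conjTranspose_mul, hsherm.eq, imM_conjTranspose_of_herm hW]
    simp only [Matrix.mul_neg, Matrix.neg_mul]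
    rw [Matrix.mul_assoc]
  have skewX := skew hX
  have skewY := skew hY
  -- cosmetic: conjugation by s of PSD matrices is PSD
  have conjPSD : ∀ {Q : Matrix n n ℂ}, Q.PosSemidef → (s * Q * s).PosSemidef := by
    intro Q hQ
    have := hQ.mul_mul_conjTranspose_same s
    rwa [hsherm.eq] at this
  -- the comparison matrix
  set V : Matrix n n ℂ := matAbs (s * imM X * s) + s * reM P * s with hV
  -- identity A
  have idA : V - Complex.I • (s * imM Y * s)
      = (matAbs (s * imM X * s) - Complex.I • (s * imM X * s)) + s * P * s := by
    have h1 : imM Y = imM X - imM P := by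
      ext i j; simp [imM, hP, Matrix.sub_apply, ← Complex.ofReal_sub]
    have h2 : s * P * s = s * reM P * s + Complex.I • (s * imM P * s) := by
      conv_lhs => rw [← reM_add_I_imM P]
      rw [Matrix.mul_add, Matrix.add_mul, Matrix.mul_smul, Matrix.smul_mul]
    rw [h1]
    have h3 : s * (imM X - imM P) * s = s * imM X * s - s * imM P * s := by
      rw [Matrix.mul_sub, Matrix.sub_mul]
    rw [h3, smul_sub, hV, h2]
    abel
  -- identity B
  have idB : V + Complex.I • (s * imM Y * s)
      = (matAbs (s * imM X * s) + Complex.I • (s * imM X * s)) + s * Pᵀ * s := by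
    have h1 : imM Y = imM X - imM P := by
      ext i j; simp [imM, hP, Matrix.sub_apply, ← Complex.ofReal_sub]
    have h2 : s * Pᵀ * s = s * reM P * s - Complex.I • (s * imM P * s) := by
      conv_lhs => rw [← reM_sub_I_imM_of_herm hPH]
      rw [Matrix.mul_sub, Matrix.sub_mul, Matrix.mul_smul, Matrix.smul_mul]
    have h3 : s * (imM X - imM P) * s = s * imM X * s - s * imM P * s := by
      rw [Matrix.mul_sub, Matrix.sub_mul]
    rw [h1, h3, smul_sub, hV, h2]
    abel
  -- positivity of the two pieces
  have hPt : Pᵀ.PosSemidef := hXY.transpose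
  have hVm : (V - Complex.I • (s * imM Y * s)).PosSemidef := by
    rw [idA]; exact (matAbs_sub_psd skewX).add (conjPSD hXY)
  have hVp : (V + Complex.I • (s * imM Y * s)).PosSemidef := by
    rw [idB]; exact (matAbs_add_psd skewX).add (conjPSD hPt)
  have key := trace_matAbs_le skewY hVm hVp
  -- trace computations
  have hTrV : (Matrix.trace V).re
      = (Matrix.trace (matAbs (s * imM X * s))).re + (Matrix.trace (G * reM P)).re := by
    rw [hV, Matrix.trace_add, Complex.add_re]
    congr 1
    rw [Matrix.trace_mul_cycle, hss]
  have hTrG : (Matrix.trace (G * X)).re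
      = (Matrix.trace (G * Y)).re + (Matrix.trace (G * reM P)).re := by
    have hdecomp : X = Y + (reM P + Complex.I • imM P) := by
      rw [reM_add_I_imM P, hP]; abel
    have him : (Matrix.trace (G * imM P)).im = 0 :=
      trace_real_im hGreal (imM_isReal P)
    have hsplit : Matrix.trace (G * X) = Matrix.trace (G * Y) + Matrix.trace (G * reM P)
        + Complex.I * Matrix.trace (G * imM P) := by
      conv_lhs => rw [hdecomp]
      rw [Matrix.mul_add, Matrix.mul_add, Matrix.mul_smul, Matrix.trace_add, Matrix.trace_add,
        Matrix.trace_smul, smul_eq_mul]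
      ring
    rw [hsplit, Complex.add_re, Complex.add_re, Complex.mul_re, him, Complex.I_re]
    ring
  linarith [key, hTrV, hTrG]

/-- For `Z(f) = A₁ + A₂ᴴf + fᴴA₂ + fᴴA₃f` with `A₁` Hermitian, `A₃` positive definite:
`Z(f) ≥ J := A₁ - A₂ᴴA₃⁻¹A₂` for all `f`, with equality at `f = -A₃⁻¹A₂`; hence for any real
positive definite `G`, the minimum over complex `f` of
`Tr(G Z(f)) + Tr|√G Im Z(f) √G|` equals `Tr(G J) + Tr|√G Im J √G|`. -/
theorem complete_square_min {d q : ℕ}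
    (A₁ : Matrix (Fin d) (Fin d) ℂ) (A₂ : Matrix (Fin q) (Fin d) ℂ)
    (A₃ : Matrix (Fin q) (Fin q) ℂ) (h₁ : A₁.IsHermitian) (h₃ : A₃.PosDef)
    (G : Matrix (Fin d) (Fin d) ℂ) (hG : G.PosDef) (hGreal : IsRealMat G) :
    let Z := fun f : Matrix (Fin q) (Fin d) ℂ => A₁ + A₂ᴴ * f + fᴴ * A₂ + fᴴ * A₃ * f
    let J := A₁ - A₂ᴴ * A₃⁻¹ * A₂
    let s := hG.posSemidef.sqrtOld
    (∀ f, (Z f - J).PosSemidef) ∧ Z (-(A₃⁻¹ * A₂)) = J ∧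
    IsLeast {x : ℝ | ∃ f, x = (Matrix.trace (G * Z f)).re +
        (Matrix.trace (matAbs (s * imM (Z f) * s))).re}
      ((Matrix.trace (G * J)).re + (Matrix.trace (matAbs (s * imM J * s))).re) := by
  intro Z J s
  have hdet : IsUnit A₃.det := (Matrix.isUnit_iff_isUnit_det _).mp h₃.isUnit
  have hinv : A₃ * A₃⁻¹ = 1 := Matrix.mul_nonsing_inv _ hdet
  have hinv' : A₃⁻¹ * A₃ = 1 := Matrix.nonsing_inv_mul _ hdet
  have hA3i : A₃⁻¹ᴴ = A₃⁻¹ := h₃.isHermitian.inv.eq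
  have e1 : A₃ * (A₃⁻¹ * A₂) = A₂ := by rw [← Matrix.mul_assoc, hinv, Matrix.one_mul]
  have e2 : A₂ᴴ * A₃⁻¹ * A₃ = A₂ᴴ := by rw [Matrix.mul_assoc, hinv', Matrix.mul_one]
  have hsq : ∀ f, Z f - J = (f + A₃⁻¹ * A₂)ᴴ * A₃ * (f + A₃⁻¹ * A₂) := by
    intro f
    have hgH : (f + A₃⁻¹ * A₂)ᴴ = fᴴ + A₂ᴴ * A₃⁻¹ := by
      rw [conjTranspose_add, conjTranspose_mul, hA3i]
    rw [hgH]
    have expand : (fᴴ + A₂ᴴ * A₃⁻¹) * A₃ * (f + A₃⁻¹ * A₂)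
        = fᴴ * A₃ * f + fᴴ * (A₃ * (A₃⁻¹ * A₂)) + (A₂ᴴ * A₃⁻¹ * A₃) * f
          + (A₂ᴴ * A₃⁻¹ * A₃) * (A₃⁻¹ * A₂) := by
      rw [Matrix.add_mul, Matrix.add_mul, Matrix.mul_add, Matrix.mul_add,
        Matrix.mul_assoc fᴴ A₃ (A₃⁻¹ * A₂)]
      abel
    rw [expand, e1, e2]
    show A₁ + A₂ᴴ * f + fᴴ * A₂ + fᴴ * A₃ * f - (A₁ - A₂ᴴ * A₃⁻¹ * A₂) = _
    rw [Matrix.mul_assoc A₂ᴴ A₃⁻¹ A₂]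
    abel
  have part1 : ∀ f, (Z f - J).PosSemidef := by
    intro f
    rw [hsq f]
    exact h₃.posSemidef.conjTranspose_mul_mul_same _
  have part2 : Z (-(A₃⁻¹ * A₂)) = J := by
    have h0 : (-(A₃⁻¹ * A₂) + A₃⁻¹ * A₂) = (0 : Matrix (Fin q) (Fin d) ℂ) := neg_add_cancel _
    have := hsq (-(A₃⁻¹ * A₂))
    rw [h0] at this
    simp only [conjTranspose_zero, Matrix.zero_mul, Matrix.mul_zero] at this
    exact sub_eq_zero.mp this
  refine ⟨part1, part2, ⟨-(A₃⁻¹ * A₂), by rw [part2]⟩, ?_⟩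
  rintro x ⟨f, rfl⟩
  have hZH : (Z f).IsHermitian := by
    show (A₁ + A₂ᴴ * f + fᴴ * A₂ + fᴴ * A₃ * f)ᴴ = A₁ + A₂ᴴ * f + fᴴ * A₂ + fᴴ * A₃ * f
    simp only [conjTranspose_add, conjTranspose_mul, conjTranspose_conjTranspose, h₁.eq,
      h₃.isHermitian.eq, Matrix.mul_assoc]
    abel
  have hJH : J.IsHermitian := by
    show (A₁ - A₂ᴴ * A₃⁻¹ * A₂)ᴴ = A₁ - A₂ᴴ * A₃⁻¹ * A₂
    simp only [conjTranspose_sub, conjTranspose_mul, conjTranspose_conjTranspose, h₁.eq, hA3i,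
      Matrix.mul_assoc]
  exact F_mono hG hGreal hZH hJH (part1 f)
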